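/- For every n with 2 ≤ n ≤ ω, the set X_n is a dense G_δ subset of ((2^ℕ)^ℕ)^n (with the product topology). -/
import Mathlib


open MeasureTheory

/-- Iterated powerset type over Cantor space: `It 0 = 2^ℕ`, `It (m+1) = Set (It m)`. -/
def It : ℕ → Type
  | 0 => ℕ → Bool
  | m + 1 => Set (It m)

/-- `aF x m l` is the set `a^{x,l}_{m+1}` from the recursive construction. -/
def aF (x : ℕ → ℕ → ℕ → Bool) : (m : ℕ) → ℕ → It (m + 1)
  | 0, l => {z : It 0 | ∃ k, x 1 l k = true ∧ z = x 0 k}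
  | m + 1, l => {z : It (m + 1) | ∃ k, x (m + 2) l k = true ∧ z = aF x m k}

/-- `AS x m` is the set `A^x_{m+1}` from the recursive construction. -/
def AS (x : ℕ → ℕ → ℕ → Bool) : (m : ℕ) → It (m + 1)
  | 0 => {z : It 0 | ∃ k, z = x 0 k}
  | m + 1 => {z : It (m + 1) | ∃ k, z = aF x m k}

/-- Extension of a finite tuple to an infinite sequence, by a junk value. -/
def extFin {n : ℕ} (x : Fin n → ℕ → ℕ → Bool) : ℕ → ℕ → ℕ → Bool :=
  fun i => if h : i < n then x ⟨i, h⟩ else fun _ _ => true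

/-- The domain `X_n ⊆ ((2^ℕ)^ℕ)^n`. -/
def XSet (n : ℕ) : Set (Fin n → ℕ → ℕ → Bool) :=
  {x | ∀ (i : ℕ) (_ : 1 ≤ i) (hn : i < n),
    (∀ m, ∃ k, x ⟨i, hn⟩ k m = true) ∧
    (∀ k, ∃ m, x ⟨i, hn⟩ k m = true) ∧
    (∀ k l₁ l₂,
      x ⟨i - 1, Nat.lt_of_le_of_lt (Nat.sub_le i 1) hn⟩ l₁ =
        x ⟨i - 1, Nat.lt_of_le_of_lt (Nat.sub_le i 1) hn⟩ l₂ →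
      x ⟨i, hn⟩ k l₁ = x ⟨i, hn⟩ k l₂)}

/-- The domain `X_ω ⊆ ((2^ℕ)^ℕ)^ω`. -/
def XInf : Set (ℕ → ℕ → ℕ → Bool) :=
  {x | ∀ (i : ℕ) (_ : 1 ≤ i),
    (∀ m, ∃ k, x i k m = true) ∧
    (∀ k, ∃ m, x i k m = true) ∧
    (∀ k l₁ l₂, x (i - 1) l₁ = x (i - 1) l₂ → x i k l₁ = x i k l₂)}

/-- The relation `F_n` (`x F_n y ↔ A^x_n = A^y_n`), as a relation on the ambient space.
For `n = 0` this is the trivial (full) relation. -/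
def Ffin (n : ℕ) (x y : Fin n → ℕ → ℕ → Bool) : Prop :=
  AS (extFin x) (n - 1) = AS (extFin y) (n - 1)

/-- The relation `F_ω` : `x F_ω y ↔ ∀ k ≥ 1, A^x_k = A^y_k`. -/
def Fomega (x y : ℕ → ℕ → ℕ → Bool) : Prop :=
  ∀ m, AS x m = AS y m

/-- The projection `u^n_k` to the first `k` coordinates. -/
def projFin {n : ℕ} (k : ℕ) (h : k ≤ n) (x : Fin n → ℕ → ℕ → Bool) :
    Fin k → ℕ → ℕ → Bool :=
  fun i => x (Fin.castLE h i)

/-- The projection `u^ω_k` to the first `k` coordinates. -/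
def projInf (k : ℕ) (x : ℕ → ℕ → ℕ → Bool) : Fin k → ℕ → ℕ → Bool :=
  fun i => x i.val

theorem projFin_mem {n k : ℕ} (h : k ≤ n) {x : Fin n → ℕ → ℕ → Bool}
    (hx : x ∈ XSet n) : projFin k h x ∈ XSet k :=
  fun i h1 hik => hx i h1 (lt_of_lt_of_le hik h)

theorem projInf_mem (k : ℕ) {x : ℕ → ℕ → ℕ → Bool} (hx : x ∈ XInf) :
    projInf k x ∈ XSet k :=
  fun i h1 _ => hx i h1

def projSubFin {n : ℕ} (k : ℕ) (h : k ≤ n) (x : ↥(XSet n)) : ↥(XSet k) :=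
  ⟨projFin k h x.1, projFin_mem h x.2⟩

def projSubInf (k : ℕ) (x : ↥XInf) : ↥(XSet k) :=
  ⟨projInf k x.1, projInf_mem k x.2⟩

/-- The domains of the iterated Friedman–Stanley jumps. -/
def fsSpace : ℕ → Type
  | 0 => ℕ → Bool
  | n + 1 => ℕ → fsSpace n

/-- The Friedman–Stanley jump of an equivalence relation. -/
def fsJump {X : Type} (E : X → X → Prop) (x y : ℕ → X) : Prop :=
  (∀ n, ∃ m, E (x n) (y m)) ∧ (∀ n, ∃ m, E (y n) (x m))

/-- The iterated Friedman–Stanley jump `=^{+n}`. -/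
def fsIter : (n : ℕ) → fsSpace n → fsSpace n → Prop
  | 0 => Eq
  | n + 1 => fsJump (fsIter n)

instance fsSpaceTopologicalSpace : (n : ℕ) → TopologicalSpace (fsSpace n)
  | 0 => inferInstanceAs (TopologicalSpace (ℕ → Bool))
  | n + 1 =>
    letI := fsSpaceTopologicalSpace n
    inferInstanceAs (TopologicalSpace (ℕ → fsSpace n))

instance fsSpaceMeasurableSpace : (n : ℕ) → MeasurableSpace (fsSpace n)
  | 0 => inferInstanceAs (MeasurableSpace (ℕ → Bool))
  | n + 1 =>
    letI := fsSpaceMeasurableSpace n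
    inferInstanceAs (MeasurableSpace (ℕ → fsSpace n))

/-- `=^{+ω}`, the product of the `=^{+k}`. -/
def fsOmega (x y : ∀ k, fsSpace k) : Prop :=
  ∀ k, fsIter k (x k) (y k)

/-- Borel reducibility of equivalence relations. -/
def BorelReducible {X Y : Type*} [MeasurableSpace X] [MeasurableSpace Y]
    (E : X → X → Prop) (F : Y → Y → Prop) : Prop :=
  ∃ f : X → Y, Measurable f ∧ ∀ a b, E a b ↔ F (f a) (f b)

/-- The Polish topology of pointwise convergence on the symmetric group of a
(countable, discrete) set. -/
def permTopology (A : Type*) : TopologicalSpace (Equiv.Perm A) :=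
  TopologicalSpace.induced (fun g => (g : A → A))
    (@Pi.topologicalSpace A (fun _ => A) fun _ => ⊥)

/-- The orbit equivalence relation of an action. -/
def OrbitRel {G Y : Type*} (act : G → Y → Y) (y₁ y₂ : Y) : Prop :=
  ∃ g, act g y₁ = y₂

/-- Classifiable by countable structures: Borel reducible to the orbit equivalence
relation of a continuous action of `S_∞` on a Polish space. -/
def ClassifiableByCountableStructures {X : Type*} [MeasurableSpace X]
    (E : X → X → Prop) : Prop :=
  ∃ (Y : Type) (_ : TopologicalSpace Y) (_ : MeasurableSpace Y),
    PolishSpace Y ∧ BorelSpace Y ∧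
    ∃ act : Equiv.Perm ℕ → Y → Y,
      (∀ y, act 1 y = y) ∧
      (∀ g h y, act (g * h) y = act g (act h y)) ∧
      (letI := permTopology ℕ
       Continuous fun p : Equiv.Perm ℕ × Y => act p.1 p.2) ∧
      BorelReducible E (OrbitRel act)

/-- `E` is prime to `F`. -/
def PrimeTo {X Y : Type*} [MeasurableSpace X] [MeasurableSpace Y]
    (E : X → X → Prop) (F : Y → Y → Prop) : Prop :=
  ∀ f : X → Y, Measurable f → (∀ a b, E a b → F (f a) (f b)) →
    ∃ y : Y, BorelReducible E (fun a b : {x : X // F (f x) y} => E a.1 b.1)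

/-- A sequence of elements of Cantor space is separated if any two distinct naturals
are separated by some member of the sequence. -/
def SeqSeparated (z : ℕ → ℕ → Bool) : Prop :=
  ∀ a b : ℕ, a ≠ b → ∃ i, z i a ≠ z i b

section XSetHelpers
open Filter Topology Set

/-! ### Density helpers -/

def approx1 (g : ℕ → ℕ → Bool) (N : ℕ) : ℕ → ℕ → Bool :=
  fun k m => if k < N then (if m < N then g k m else decide (m = N + k))
    else decide (m < N ∨ k ≤ m)

lemma approx1_agree {g : ℕ → ℕ → Bool} {N k m : ℕ} (hk : k < N) (hm : m < N) :
    approx1 g N k m = g k m := by simp [approx1, hk, hm]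

lemma approx1_surj1 (g : ℕ → ℕ → Bool) (N m : ℕ) : approx1 g N N m = true := by
  simp only [approx1, lt_irrefl, if_false, decide_eq_true_eq]; omega

lemma approx1_surj2 (g : ℕ → ℕ → Bool) (N k : ℕ) : ∃ m, approx1 g N k m = true := by
  by_cases hk : k < N
  · exact ⟨N + k, by simp [approx1, hk]⟩
  · exact ⟨k, by simp [approx1, hk]⟩

lemma approx1_val_lt {g : ℕ → ℕ → Bool} {N k m : ℕ} (hk : k < N) (hm : ¬ m < N) :
    approx1 g N k m = decide (m = N + k) := by simp [approx1, hk, hm]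

lemma approx1_val_ge {g : ℕ → ℕ → Bool} {N k m : ℕ} (hk : ¬ k < N) :
    approx1 g N k m = decide (m < N ∨ k ≤ m) := by simp [approx1, hk]

lemma approx1_ne (g : ℕ → ℕ → Bool) (N : ℕ) {l₁ l₂ : ℕ} (h : l₁ < l₂) :
    approx1 g N l₁ ≠ approx1 g N l₂ := by
  intro he
  by_cases h2 : l₂ < N
  · have h1 : l₁ < N := h.trans h2
    have e1 : approx1 g N l₁ (N + l₁) = true := by
      rw [approx1_val_lt h1 (by omega)]; simp
    have e2 : approx1 g N l₂ (N + l₁) = false := by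
      rw [approx1_val_lt h2 (by omega)]
      simp only [decide_eq_false_iff_not]; omega
    have := congrFun he (N + l₁)
    rw [e1, e2] at this
    simp at this
  · by_cases h1 : l₁ < N
    · have e1 : approx1 g N l₁ (N + l₂) = false := by
        rw [approx1_val_lt h1 (by omega)]
        simp only [decide_eq_false_iff_not]; omega
      have e2 : approx1 g N l₂ (N + l₂) = true := by
        rw [approx1_val_ge h2]
        simp only [decide_eq_true_eq]; omega
      have := congrFun he (N + l₂)
      rw [e1, e2] at this
      simp at this
    · have e1 : approx1 g N l₁ l₁ = true := by
        rw [approx1_val_ge h1]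
        simp only [decide_eq_true_eq]; omega
      have e2 : approx1 g N l₂ l₁ = false := by
        rw [approx1_val_ge h2]
        simp only [decide_eq_false_iff_not]; omega
      have := congrFun he l₁
      rw [e1, e2] at this
      simp at this

lemma approx1_inj (g : ℕ → ℕ → Bool) (N : ℕ) : Function.Injective (approx1 g N) := by
  intro a b h
  rcases lt_trichotomy a b with hl | hl | hl
  · exact absurd h (approx1_ne g N hl)
  · exact hl
  · exact absurd h.symm (approx1_ne g N hl)

lemma approx_mem_XInf (x : ℕ → ℕ → ℕ → Bool) (N : ℕ) :
    (fun i => approx1 (x i) N) ∈ XInf := by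
  intro i _
  exact ⟨fun m => ⟨N, approx1_surj1 _ _ _⟩, fun k => approx1_surj2 _ _ _,
    fun k l₁ l₂ h => by rw [approx1_inj _ _ h]⟩

lemma approx_mem_XSet {n : ℕ} (x : Fin n → ℕ → ℕ → Bool) (N : ℕ) :
    (fun i => approx1 (x i) N) ∈ XSet n := by
  intro i _ hn
  exact ⟨fun m => ⟨N, approx1_surj1 _ _ _⟩, fun k => approx1_surj2 _ _ _,
    fun k l₁ l₂ h => by rw [approx1_inj _ _ h]⟩

lemma tendsto_approx1 (g : ℕ → ℕ → Bool) (k m : ℕ) :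
    Tendsto (fun N => approx1 g N k m) atTop (nhds (g k m)) := by
  apply tendsto_const_nhds.congr'
  filter_upwards [eventually_gt_atTop (max k m)] with N hN
  exact (approx1_agree (lt_of_le_of_lt (le_max_left _ _) hN)
    (lt_of_le_of_lt (le_max_right _ _) hN)).symm

lemma dense_XInf : Dense XInf := by
  intro x
  refine mem_closure_of_tendsto (f := fun N => fun i => approx1 (x i) N) (b := atTop)
    ?_ (Eventually.of_forall fun N => approx_mem_XInf x N)
  rw [tendsto_pi_nhds]; intro i
  rw [tendsto_pi_nhds]; intro k
  rw [tendsto_pi_nhds]; intro m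
  exact tendsto_approx1 (x i) k m

lemma dense_XSet (n : ℕ) : Dense (XSet n) := by
  intro x
  refine mem_closure_of_tendsto (f := fun N => fun i : Fin n => approx1 (x i) N) (b := atTop)
    ?_ (Eventually.of_forall fun N => approx_mem_XSet x N)
  rw [tendsto_pi_nhds]; intro i
  rw [tendsto_pi_nhds]; intro k
  rw [tendsto_pi_nhds]; intro m
  exact tendsto_approx1 (x i) k m

/-! ### Gδ helpers -/

lemma isOpen_exists_eval {X : Type*} [TopologicalSpace X] {f : ℕ → X → Bool}
    (hf : ∀ k, Continuous (f k)) : IsOpen {x | ∃ k, f k x = true} := by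
  have : {x | ∃ k, f k x = true} = ⋃ k, f k ⁻¹' {true} := by ext; simp
  rw [this]
  exact isOpen_iUnion fun k => (isOpen_discrete _).preimage (hf k)

lemma isOpen_eq_bool {X : Type*} [TopologicalSpace X] {f g : X → Bool}
    (hf : Continuous f) (hg : Continuous g) : IsOpen {x | f x = g x} := by
  have : {x | f x = g x} = (fun x => (f x, g x)) ⁻¹' {p : Bool × Bool | p.1 = p.2} := rfl
  rw [this]
  exact (isOpen_discrete _).preimage (hf.prodMk hg)

lemma isOpen_imp {X : Type*} [TopologicalSpace X] {s t : Set X}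
    (hs : IsClosed s) (ht : IsOpen t) : IsOpen {x | x ∈ s → x ∈ t} := by
  have : {x | x ∈ s → x ∈ t} = sᶜ ∪ t := by ext x; by_cases h : x ∈ s <;> simp [h]
  rw [this]
  exact hs.isOpen_compl.union ht

def WInf (q : ℕ × ℕ × ℕ × ℕ × ℕ) : Set (ℕ → ℕ → ℕ → Bool) :=
  {x | 1 ≤ q.1 →
    (∃ k', x q.1 k' q.2.2.2.2 = true) ∧
    (∃ m', x q.1 q.2.1 m' = true) ∧
    (x (q.1 - 1) q.2.2.1 = x (q.1 - 1) q.2.2.2.1 →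
      x q.1 q.2.1 q.2.2.1 = x q.1 q.2.1 q.2.2.2.1)}

lemma isOpen_WInf (q : ℕ × ℕ × ℕ × ℕ × ℕ) : IsOpen (WInf q) := by
  obtain ⟨i, k, l₁, l₂, m⟩ := q
  by_cases hi : 1 ≤ i
  · have he : WInf (i, k, l₁, l₂, m) =
        {x : ℕ → ℕ → ℕ → Bool | ∃ k', x i k' m = true} ∩
        ({x | ∃ m', x i k m' = true} ∩
         {x | x (i-1) l₁ = x (i-1) l₂ → x i k l₁ = x i k l₂}) := by
      ext x; simp [WInf, hi]
    rw [he]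
    have ceval : ∀ (a b c : ℕ), Continuous fun x : ℕ → ℕ → ℕ → Bool => x a b c :=
      fun a b c => (continuous_apply c).comp ((continuous_apply b).comp (continuous_apply a))
    refine (isOpen_exists_eval fun k' => ?_).inter ((isOpen_exists_eval fun m' => ?_).inter ?_)
    · exact ceval i k' m
    · exact ceval i k m'
    · have hcl : IsClosed {x : ℕ → ℕ → ℕ → Bool | x (i-1) l₁ = x (i-1) l₂} :=
        isClosed_eq ((continuous_apply l₁).comp (continuous_apply (i-1)))
          ((continuous_apply l₂).comp (continuous_apply (i-1)))
      exact isOpen_imp hcl (isOpen_eq_bool (ceval i k l₁) (ceval i k l₂))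
  · have he : WInf (i, k, l₁, l₂, m) = univ := by
      ext x; simp [WInf, hi]
    rw [he]; exact isOpen_univ

lemma XInf_eq : XInf = ⋂ q, WInf q := by
  ext x
  constructor
  · intro hx
    refine mem_iInter.2 fun ⟨i, k, l₁, l₂, m⟩ hi => ?_
    obtain ⟨h1, h2, h3⟩ := hx i hi
    exact ⟨h1 m, h2 k, h3 k l₁ l₂⟩
  · intro hx i hi
    have h := fun q => mem_iInter.1 hx q
    exact ⟨fun m => (h (i, 0, 0, 0, m) hi).1, fun k => (h (i, k, 0, 0, 0) hi).2.1,
      fun k l₁ l₂ => (h (i, k, l₁, l₂, 0) hi).2.2⟩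

lemma isGδ_XInf : IsGδ XInf := by
  rw [XInf_eq]
  exact IsGδ.iInter_of_isOpen fun q => isOpen_WInf q

def WFin (n : ℕ) (q : ℕ × ℕ × ℕ × ℕ × ℕ) : Set (Fin n → ℕ → ℕ → Bool) :=
  {x | 1 ≤ q.1 → ∀ hn : q.1 < n,
    (∃ k', x ⟨q.1, hn⟩ k' q.2.2.2.2 = true) ∧
    (∃ m', x ⟨q.1, hn⟩ q.2.1 m' = true) ∧
    (x ⟨q.1 - 1, Nat.lt_of_le_of_lt (Nat.sub_le q.1 1) hn⟩ q.2.2.1 =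
       x ⟨q.1 - 1, Nat.lt_of_le_of_lt (Nat.sub_le q.1 1) hn⟩ q.2.2.2.1 →
      x ⟨q.1, hn⟩ q.2.1 q.2.2.1 = x ⟨q.1, hn⟩ q.2.1 q.2.2.2.1)}

lemma isOpen_WFin (n : ℕ) (q : ℕ × ℕ × ℕ × ℕ × ℕ) : IsOpen (WFin n q) := by
  obtain ⟨i, k, l₁, l₂, m⟩ := q
  by_cases hi : 1 ≤ i ∧ i < n
  · obtain ⟨hi1, hin⟩ := hi
    have he : WFin n (i, k, l₁, l₂, m) =
        {x : Fin n → ℕ → ℕ → Bool | ∃ k', x ⟨i, hin⟩ k' m = true} ∩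
        ({x | ∃ m', x ⟨i, hin⟩ k m' = true} ∩
         {x | x ⟨i - 1, Nat.lt_of_le_of_lt (Nat.sub_le i 1) hin⟩ l₁ =
                x ⟨i - 1, Nat.lt_of_le_of_lt (Nat.sub_le i 1) hin⟩ l₂ →
              x ⟨i, hin⟩ k l₁ = x ⟨i, hin⟩ k l₂}) := by
      ext x; simp [WFin, hi1, hin]
    rw [he]
    have ceval : ∀ (a : Fin n) (b c : ℕ), Continuous fun x : Fin n → ℕ → ℕ → Bool => x a b c :=
      fun a b c => (continuous_apply c).comp ((continuous_apply b).comp (continuous_apply a))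
    refine (isOpen_exists_eval fun k' => ?_).inter ((isOpen_exists_eval fun m' => ?_).inter ?_)
    · exact ceval _ k' m
    · exact ceval _ k m'
    · have hcl : IsClosed {x : Fin n → ℕ → ℕ → Bool |
          x ⟨i - 1, Nat.lt_of_le_of_lt (Nat.sub_le i 1) hin⟩ l₁ =
            x ⟨i - 1, Nat.lt_of_le_of_lt (Nat.sub_le i 1) hin⟩ l₂} :=
        isClosed_eq ((continuous_apply l₁).comp (continuous_apply _))
          ((continuous_apply l₂).comp (continuous_apply _))
      exact isOpen_imp hcl (isOpen_eq_bool (ceval _ k l₁) (ceval _ k l₂))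
  · have he : WFin n (i, k, l₁, l₂, m) = univ := by
      ext x
      simp only [WFin, mem_setOf_eq, mem_univ, iff_true]
      intro h1 hn
      exact absurd ⟨h1, hn⟩ hi
    rw [he]; exact isOpen_univ

lemma XSet_eq (n : ℕ) : XSet n = ⋂ q, WFin n q := by
  ext x
  constructor
  · intro hx
    refine mem_iInter.2 fun ⟨i, k, l₁, l₂, m⟩ hi hn => ?_
    obtain ⟨h1, h2, h3⟩ := hx i hi hn
    exact ⟨h1 m, h2 k, h3 k l₁ l₂⟩
  · intro hx i hi hn
    have h := fun q => mem_iInter.1 hx q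
    exact ⟨fun m => (h (i, 0, 0, 0, m) hi hn).1, fun k => (h (i, k, 0, 0, 0) hi hn).2.1,
      fun k l₁ l₂ => (h (i, k, l₁, l₂, 0) hi hn).2.2⟩

lemma isGδ_XSet (n : ℕ) : IsGδ (XSet n) := by
  rw [XSet_eq]
  exact IsGδ.iInter_of_isOpen fun q => isOpen_WFin n q

end XSetHelpers

/-- for `2 ≤ n ≤ ω`, the set `X_n` is a dense `G_δ` subset of
`((2^ℕ)^ℕ)^n`. -/
theorem XSet_dense_Gdelta :
    (∀ n : ℕ, 2 ≤ n → IsGδ (XSet n) ∧ Dense (XSet n)) ∧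
    (IsGδ XInf ∧ Dense XInf) :=
  ⟨fun n _ => ⟨isGδ_XSet n, dense_XSet n⟩, isGδ_XInf, dense_XInf⟩
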